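/- Let a : ℝⁿ × ℝ → ℝ be continuous with bounds 0 < α ≤ a ≤ β and let b : ℝⁿ × ℝ → ℝⁿ be continuous with α − |b(x,t)| ≥ η > 0 for all (x,t). Define the drift reachable set R_t(x) via paths γ with |γ'(r) − b(γ(r), r)| ≤ a(γ(r), r) a.e. Then for all x and t ≥ 0, the closed ball B̄_{tη}(x) is contained in R_t(x), and R_t(x) ⊆ B̄_{t(β + α − η)}(x). -/

import Mathlib

open Metric Set MeasureTheory Pointwise

noncomputable section

/-- An admissible path for the drift control system on `[s,t]`: a Lipschitz curve whose
a.e. derivative satisfies `|γ'(r) - b(γ(r), r)| ≤ a(γ(r), r)`. -/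
def AdmissibleDrift {n : ℕ} (a : EuclideanSpace ℝ (Fin n) → ℝ → ℝ)
    (b : EuclideanSpace ℝ (Fin n) → ℝ → EuclideanSpace ℝ (Fin n)) (s t : ℝ)
    (γ : ℝ → EuclideanSpace ℝ (Fin n)) : Prop :=
  (∃ C : NNReal, LipschitzOnWith C γ (Set.Icc s t)) ∧
  ∀ᵐ r ∂(MeasureTheory.volume.restrict (Set.Ioo s t)),
    ∃ v, HasDerivAt γ v r ∧ ‖v - b (γ r) r‖ ≤ a (γ r) r

/-- The reachable set at time `t` starting from `x` at time `0` for the drift system. -/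
def ReachDrift {n : ℕ} (a : EuclideanSpace ℝ (Fin n) → ℝ → ℝ)
    (b : EuclideanSpace ℝ (Fin n) → ℝ → EuclideanSpace ℝ (Fin n)) (t : ℝ)
    (x : EuclideanSpace ℝ (Fin n)) : Set (EuclideanSpace ℝ (Fin n)) :=
  {y | ∃ γ, AdmissibleDrift a b 0 t γ ∧ γ 0 = x ∧ γ t = y}

/-- Key estimate: a Lipschitz curve whose a.e. derivative is bounded by `M` moves at
speed at most `M`. -/
lemma drift_key_bound {n : ℕ} (γ : ℝ → EuclideanSpace ℝ (Fin n)) (t M : ℝ)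
    (ht : 0 ≤ t) (hM : 0 ≤ M) (C : NNReal) (hLip : LipschitzOnWith C γ (Set.Icc 0 t))
    (hae : ∀ᵐ r ∂(volume.restrict (Set.Ioo 0 t)), ∃ v, HasDerivAt γ v r ∧ ‖v‖ ≤ M) :
    ‖γ t - γ 0‖ ≤ M * t := by
  set P : ℝ → Prop := fun r => ∃ v, HasDerivAt γ v r ∧ ‖v‖ ≤ M with hP
  have hN0 : volume ({r | ¬ P r} ∩ Ioo 0 t) = 0 := by
    rw [ae_iff] at hae
    rwa [Measure.restrict_apply' measurableSet_Ioo] at hae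
  set N : Set ℝ := ({r | ¬ P r} ∩ Ioo 0 t) ∪ {0} with hN
  have hNnull : volume N = 0 := by
    apply measure_union_null hN0
    simp
  set K : ℝ := (C : ℝ) + M + 1 with hK
  have hK0 : 0 < K := by
    have := C.coe_nonneg
    rw [hK]; linarith
  have main : ∀ ε : ℝ, 0 < ε → ‖γ t - γ 0‖ ≤ (M + ε) * t + K * ε := by
    intro ε hε
    obtain ⟨U, hNU, hUopen, hUvol⟩ := Set.exists_isOpen_lt_of_lt N (ENNReal.ofReal ε)
      (by rw [hNnull]; exact ENNReal.ofReal_pos.2 hε)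
    set φ : ℝ → ℝ := fun s => (volume (Icc 0 s ∩ U)).toReal with hφ
    have hfin : ∀ s : ℝ, volume (Icc 0 s ∩ U) ≠ ⊤ := fun s =>
      ((measure_mono inter_subset_left).trans_lt measure_Icc_lt_top).ne
    have hφmono : ∀ u v : ℝ, u ≤ v → φ u ≤ φ v := fun u v huv =>
      ENNReal.toReal_mono (hfin v)
        (measure_mono (inter_subset_inter_left _ (Icc_subset_Icc_right huv)))
    have hφlip : ∀ u v : ℝ, u ≤ v → φ v ≤ φ u + (v - u) := by
      intro u v huv
      have hsub : Icc 0 v ∩ U ⊆ (Icc 0 u ∩ U) ∪ Ioc u v := by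
        rintro w ⟨⟨hw0, hwv⟩, hwU⟩
        by_cases h : w ≤ u
        · exact Or.inl ⟨⟨hw0, h⟩, hwU⟩
        · exact Or.inr ⟨lt_of_not_ge h, hwv⟩
      calc φ v ≤ ((volume (Icc 0 u ∩ U)) + volume (Ioc u v)).toReal := by
            apply ENNReal.toReal_mono
            · exact ENNReal.add_ne_top.2 ⟨hfin u, measure_Ioc_lt_top.ne⟩
            · exact (measure_mono hsub).trans (measure_union_le _ _)
        _ = φ u + (v - u) := by
            rw [ENNReal.toReal_add (hfin u) measure_Ioc_lt_top.ne, Real.volume_Ioc,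
              ENNReal.toReal_ofReal (by linarith)]
    have hφfull : ∀ u v : ℝ, 0 ≤ u → u ≤ v → Ioc u v ⊆ U → φ u + (v - u) ≤ φ v := by
      intro u v hu huv hUsub
      have hsub : (Icc 0 u ∩ U) ∪ Ioc u v ⊆ Icc 0 v ∩ U := by
        rintro w (⟨⟨hw0, hwu⟩, hwU⟩ | ⟨hwu, hwv⟩)
        · exact ⟨⟨hw0, hwu.trans huv⟩, hwU⟩
        · exact ⟨⟨hu.trans hwu.le, hwv⟩, hUsub ⟨hwu, hwv⟩⟩
      have hdisj : Disjoint (Icc 0 u ∩ U) (Ioc u v) :=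
        Set.disjoint_left.2 fun w hw hw' => absurd hw.1.2 (not_le.2 hw'.1)
      have hunion := measure_union (μ := volume) hdisj measurableSet_Ioc
      have hle : volume (Icc 0 u ∩ U) + volume (Ioc u v) ≤ volume (Icc 0 v ∩ U) := by
        rw [← hunion]; exact measure_mono hsub
      have h2 := ENNReal.toReal_mono (hfin v) hle
      rwa [ENNReal.toReal_add (hfin u) measure_Ioc_lt_top.ne, Real.volume_Ioc,
        ENNReal.toReal_ofReal (by linarith)] at h2
    have habs : ∀ u v : ℝ, u ≤ v → |φ v - φ u| ≤ |v - u| := by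
      intro u v h
      rw [abs_of_nonneg (sub_nonneg.2 (hφmono u v h)), abs_of_nonneg (sub_nonneg.2 h)]
      linarith [hφlip u v h]
    have hφcont : Continuous φ := by
      apply LipschitzWith.continuous (K := 1)
      apply LipschitzWith.of_dist_le_mul
      intro u v
      rw [Real.dist_eq, Real.dist_eq]
      push_cast
      rw [one_mul]
      rcases le_total u v with h | h
      · rw [abs_sub_comm (φ u), abs_sub_comm u]
        exact habs u v h
      · exact habs v u h
    set f : ℝ → ℝ := fun s => ‖γ s - γ 0‖ - K * φ s with hf
    have key : ∀ z ∈ Icc (0:ℝ) t, f z ≤ (M + ε) * z := by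
      intro z hz
      refine image_le_of_liminf_slope_right_lt_deriv_boundary (a := 0) (b := t) (f := f)
        (f' := fun _ => M) (B := fun s => (M + ε) * s) (B' := fun _ => M + ε)
        ?_ ?_ ?_ ?_ ?_ hz
      · exact (((hLip.continuousOn).sub continuousOn_const).norm).sub
          ((continuous_const.mul hφcont).continuousOn)
      · intro x hx r hr
        have hxt : x < t := hx.2
        by_cases hxU : x ∈ U
        · obtain ⟨δ, hδ, hball⟩ := Metric.mem_nhds_iff.1 (hUopen.mem_nhds hxU)
          have hc : x < min (x + δ) t := lt_min (by linarith) hxt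
          apply Filter.Eventually.frequently
          filter_upwards [Ioo_mem_nhdsGT hc] with z hz
          have hxz : x < z := hz.1
          have hzt : z ≤ t := (hz.2.trans_le (min_le_right _ _)).le
          have hzδ : z < x + δ := hz.2.trans_le (min_le_left _ _)
          have hsubU : Ioc x z ⊆ U := by
            intro w hw
            apply hball
            rw [Metric.mem_ball, Real.dist_eq, abs_of_pos (by linarith [hw.1])]
            linarith [hw.2]
          have hfull := hφfull x z hx.1 hxz.le hsubU
          have hlipγ : ‖γ z - γ x‖ ≤ (C : ℝ) * (z - x) := by
            have := hLip.dist_le_mul z ⟨hx.1.trans hxz.le, hzt⟩ x ⟨hx.1, hxt.le⟩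
            rwa [dist_eq_norm, Real.dist_eq, abs_of_pos (by linarith)] at this
          have hnn : ‖γ z - γ 0‖ - ‖γ x - γ 0‖ ≤ ‖γ z - γ x‖ := by
            have := norm_sub_norm_le (γ z - γ 0) (γ x - γ 0)
            rwa [sub_sub_sub_cancel_right] at this
          have hfz : f z - f x ≤ ((C : ℝ) - K) * (z - x) := by
            simp only [hf]
            have : K * (z - x) ≤ K * (φ z - φ x) :=
              mul_le_mul_of_nonneg_left (by linarith) hK0.le
            nlinarith
          rw [slope_def_field, div_lt_iff₀ (by linarith)]
          have hCK : ((C : ℝ) - K) * (z - x) < r * (z - x) := by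
            apply mul_lt_mul_of_pos_right _ (by linarith)
            have : (C : ℝ) - K = -(M + 1) := by rw [hK]; ring
            rw [this]; linarith
          linarith
        · have hx0 : 0 < x := by
            rcases hx.1.lt_or_eq with h | h
            · exact h
            · exact absurd (hNU (Or.inr (by simp [← h]))) hxU
          have hxP : P x := by
            by_contra hnp
            exact hxU (hNU (Or.inl ⟨hnp, hx0, hxt⟩))
          obtain ⟨v, hdv, hvM⟩ := hxP
          have hnorm := (hasDerivAt_iff_tendsto_slope.1 hdv).norm
          have hev := hnorm.eventually_lt_const (lt_of_le_of_lt hvM hr)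
          have hev' : ∀ᶠ w in nhdsWithin x (Set.Ioi x), ‖slope γ x w‖ < r :=
            hev.filter_mono (nhdsWithin_mono x fun w hw => ne_of_gt hw)
          apply Filter.Eventually.frequently
          filter_upwards [hev', self_mem_nhdsWithin] with z hz hz'
          have hxz : x < z := hz'
          have h1 : f z - f x ≤ ‖γ z - γ x‖ := by
            simp only [hf]
            have hnn : ‖γ z - γ 0‖ - ‖γ x - γ 0‖ ≤ ‖γ z - γ x‖ := by
              have := norm_sub_norm_le (γ z - γ 0) (γ x - γ 0)
              rwa [sub_sub_sub_cancel_right] at this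
            have hmm : 0 ≤ K * (φ z - φ x) :=
              mul_nonneg hK0.le (by linarith [hφmono x z hxz.le])
            linarith
          have h2 : slope f x z ≤ ‖slope γ x z‖ := by
            rw [slope_def_field, slope_def_module, norm_smul, Real.norm_eq_abs,
              abs_of_pos (inv_pos.2 (show (0:ℝ) < z - x by linarith)), ← div_eq_inv_mul]
            gcongr
          exact lt_of_le_of_lt h2 hz
      · have h0 : 0 ≤ K * φ 0 := mul_nonneg hK0.le ENNReal.toReal_nonneg
        simp only [hf, sub_self, norm_zero, zero_sub, mul_zero]
        linarith
      · intro x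
        simpa using (hasDerivAt_id x).const_mul (M + ε)
      · exact fun x _ _ => lt_add_of_pos_right M hε
    have hft := key t ⟨ht, le_rfl⟩
    have hφt : φ t ≤ ε := by
      have h1 : volume (Icc 0 t ∩ U) ≤ ENNReal.ofReal ε :=
        (measure_mono inter_subset_right).trans hUvol.le
      calc φ t ≤ (ENNReal.ofReal ε).toReal := ENNReal.toReal_mono ENNReal.ofReal_ne_top h1
        _ = ε := ENNReal.toReal_ofReal hε.le
    simp only [hf] at hft
    have hKφ : K * φ t ≤ K * ε := mul_le_mul_of_nonneg_left hφt hK0.le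
    linarith
  have hfinal : ∀ ε : ℝ, 0 < ε → ‖γ t - γ 0‖ ≤ M * t + ε := by
    intro ε hε
    have hS : (0:ℝ) < t + K := by linarith
    have h := main (ε / (t + K)) (by positivity)
    have h3 : (M + ε / (t + K)) * t + K * (ε / (t + K)) = M * t + ε := by
      field_simp
      ring
    linarith
  exact le_of_forall_pos_le_add hfinal

theorem reachDrift_ball_bounds {n : ℕ} (a : EuclideanSpace ℝ (Fin n) → ℝ → ℝ)
    (b : EuclideanSpace ℝ (Fin n) → ℝ → EuclideanSpace ℝ (Fin n))
    (α β η : ℝ) (hα : 0 < α) (hαβ : α ≤ β) (hη : 0 < η)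
    (hacont : Continuous (fun p : EuclideanSpace ℝ (Fin n) × ℝ => a p.1 p.2))
    (hbcont : Continuous (fun p : EuclideanSpace ℝ (Fin n) × ℝ => b p.1 p.2))
    (habd : ∀ x t, α ≤ a x t ∧ a x t ≤ β)
    (hbbd : ∀ x t, η ≤ α - ‖b x t‖)
    (x : EuclideanSpace ℝ (Fin n)) (t : ℝ) (ht : 0 ≤ t) :
    Metric.closedBall x (t * η) ⊆ ReachDrift a b t x ∧
      ReachDrift a b t x ⊆ Metric.closedBall x (t * (β + α - η)) := by
  constructor
  · intro y hy
    have hdyx : ‖y - x‖ ≤ t * η := by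
      rw [← dist_eq_norm]; exact mem_closedBall.1 hy
    set v : EuclideanSpace ℝ (Fin n) := t⁻¹ • (y - x) with hv
    have hvη : ‖v‖ ≤ η := by
      rcases ht.lt_or_eq with h0 | h0
      · rw [hv, norm_smul, Real.norm_eq_abs, abs_of_pos (inv_pos.2 h0)]
        rw [inv_mul_le_iff₀ h0]
        linarith
      · have hyx : y = x := by
          have : ‖y - x‖ ≤ 0 := by rw [← h0] at hdyx; simpa using hdyx
          have := norm_nonneg (y - x)
          have : ‖y - x‖ = 0 := le_antisymm ‹_› ‹_›
          rwa [norm_sub_eq_zero_iff] at this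
        simp [hv, hyx, hη.le]
    have htv : x + t • v = y := by
      rcases ht.lt_or_eq with h0 | h0
      · rw [hv, smul_smul, mul_inv_cancel₀ h0.ne', one_smul, add_sub_cancel]
      · have hyx : y = x := by
          have : ‖y - x‖ ≤ 0 := by rw [← h0] at hdyx; simpa using hdyx
          have h2 := norm_nonneg (y - x)
          have : ‖y - x‖ = 0 := le_antisymm ‹_› h2
          rwa [norm_sub_eq_zero_iff] at this
        rw [← h0]
        simp [hyx]
    refine ⟨fun r => x + r • v, ⟨⟨‖v‖₊, ?_⟩, ?_⟩, by simp, htv⟩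
    · apply LipschitzWith.lipschitzOnWith
      apply LipschitzWith.of_dist_le_mul
      intro p q
      rw [dist_eq_norm, add_sub_add_left_eq_sub, ← sub_smul, norm_smul, Real.norm_eq_abs,
        ← Real.dist_eq, coe_nnnorm, dist_comm]
      exact le_of_eq (by ring)
    · apply Filter.Eventually.of_forall
      intro r
      refine ⟨v, ?_, ?_⟩
      · simpa using ((hasDerivAt_id r).smul_const v).const_add x
      · calc ‖v - b (x + r • v) r‖ ≤ ‖v‖ + ‖b (x + r • v) r‖ := norm_sub_le _ _
          _ ≤ η + (α - η) := add_le_add hvη (by linarith [hbbd (x + r • v) r])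
          _ = α := by ring
          _ ≤ a (x + r • v) r := (habd _ r).1
  · rintro y ⟨γ, ⟨⟨C, hC⟩, hae⟩, hγ0, hγt⟩
    have hM : (0:ℝ) ≤ β + α - η := by
      have h1 := hbbd x 0
      have h2 := norm_nonneg (b x 0)
      linarith
    have hae' : ∀ᵐ r ∂(volume.restrict (Set.Ioo 0 t)),
        ∃ v, HasDerivAt γ v r ∧ ‖v‖ ≤ β + α - η := by
      filter_upwards [hae] with r hr
      obtain ⟨v, hdv, hvb⟩ := hr
      refine ⟨v, hdv, ?_⟩
      have h1 : ‖v‖ ≤ ‖v - b (γ r) r‖ + ‖b (γ r) r‖ := by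
        simpa using norm_add_le (v - b (γ r) r) (b (γ r) r)
      have h2 := hbbd (γ r) r
      have h3 := (habd (γ r) r).2
      linarith
    have key := drift_key_bound γ t (β + α - η) ht hM C hC hae'
    rw [mem_closedBall, dist_eq_norm, ← hγt, ← hγ0]
    linarith [key]
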